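/- arXiv:1401.2257 — 2 statements merged into one kernel-verified Lean document; each statement's English description precedes it below -/
import Mathlib

section
/- Khamsi–Kirk–Yanez theorem: let (Y,d) be a hyperconvex metric space, S an arbitrary set, and F a mapping assigning to each s ∈ S a nonempty externally hyperconvex subset F(s) ⊆ Y. Then there exists a singlevalued selection f : S → Y with f(s) ∈ F(s) for every s ∈ S such that d(f(x), f(y)) ≤ Hd(F(x), F(y)) for all x, y ∈ S, where Hd denotes the Hausdorff distance between subsets of Y. -/
noncomputable section KKY

open EMetric Metric

variable {Y : Type*} [MetricSpace Y] {S : Type*}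

attribute [local instance] Classical.propDecidable

/-- The constraint set used at stage `s` of the transfinite recursion. -/
def kkyT (F : S → Set Y) (s : S) (g : ∀ t, WellOrderingRel t s → Y) : Set (Y × ℝ) :=
  {p | ∃ t, ∃ h : WellOrderingRel t s, EMetric.hausdorffEdist (F s) (F t) ≠ ⊤ ∧
    p = (g t h, (EMetric.hausdorffEdist (F s) (F t)).toReal)}

/-- The selection, defined by transfinite recursion. -/
def kkyF (F : S → Set Y) (hne : ∀ s, (F s).Nonempty) : S → Y :=
  (IsWellFounded.wf (r := WellOrderingRel (α := S))).fix fun s g =>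
    if h : ((⋂ p ∈ kkyT F s g, Metric.closedBall p.1 p.2) ∩ F s).Nonempty then h.choose
    else (hne s).choose

theorem kkyF_eq (F : S → Set Y) (hne : ∀ s, (F s).Nonempty) (s : S) :
    kkyF F hne s =
      if h : ((⋂ p ∈ kkyT F s (fun t _ => kkyF F hne t), Metric.closedBall p.1 p.2)
          ∩ F s).Nonempty then h.choose
      else (hne s).choose :=
  WellFounded.fix_eq _ _ s

theorem kkyF_spec (F : S → Set Y) (hne : ∀ s, (F s).Nonempty)
    (hext : ∀ s : S, ∀ T : Set (Y × ℝ),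
      (∀ p ∈ T, Metric.infDist p.1 (F s) ≤ p.2) →
      (∀ p ∈ T, ∀ q ∈ T, dist p.1 q.1 ≤ p.2 + q.2) →
      ((⋂ p ∈ T, Metric.closedBall p.1 p.2) ∩ F s).Nonempty) (s : S) :
    kkyF F hne s ∈ F s ∧ ∀ t, WellOrderingRel t s →
      edist (kkyF F hne s) (kkyF F hne t) ≤ EMetric.hausdorffEdist (F s) (F t) := by
  induction s using (IsWellFounded.wf (r := WellOrderingRel (α := S))).induction with
  | _ s IH =>
  -- show the constraint system is solvable
  have key : ((⋂ p ∈ kkyT F s (fun t _ => kkyF F hne t), Metric.closedBall p.1 p.2)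
      ∩ F s).Nonempty := by
    apply hext s _
    · rintro p ⟨t, ht, hfin, rfl⟩
      have h1 : EMetric.infEdist (kkyF F hne t) (F s) ≤ EMetric.hausdorffEdist (F s) (F t) := by
        rw [EMetric.hausdorffEdist, Metric.hausdorffEDist_comm]
        exact EMetric.infEdist_le_hausdorffEdist_of_mem (IH t ht).1
      rw [Metric.infDist]
      exact ENNReal.toReal_mono hfin h1
    · rintro p ⟨t, ht, hfin, rfl⟩ q ⟨u, hu, hfin', rfl⟩
      have hedist : edist (kkyF F hne t) (kkyF F hne u) ≤
          EMetric.hausdorffEdist (F t) (F u) := by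
        rcases trichotomous_of WellOrderingRel t u with h | h | h
        · rw [edist_comm, EMetric.hausdorffEdist, Metric.hausdorffEDist_comm]
          exact (IH u hu).2 t h
        · subst h; simp
        · exact (IH t ht).2 u h
      have htri : EMetric.hausdorffEdist (F t) (F u) ≤
          EMetric.hausdorffEdist (F s) (F t) + EMetric.hausdorffEdist (F s) (F u) := by
        have h1 := EMetric.hausdorffEdist_triangle (s := F t) (t := F s) (u := F u)
        rwa [EMetric.hausdorffEdist_comm (s := F t) (t := F s)] at h1
      have hle : edist (kkyF F hne t) (kkyF F hne u) ≤
          EMetric.hausdorffEdist (F s) (F t) + EMetric.hausdorffEdist (F s) (F u) :=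
        hedist.trans htri
      have hsum : (EMetric.hausdorffEdist (F s) (F t)
          + EMetric.hausdorffEdist (F s) (F u)) ≠ ⊤ := by
        simp [ENNReal.add_ne_top, hfin, hfin']
      calc dist (kkyF F hne t) (kkyF F hne u)
          = (edist (kkyF F hne t) (kkyF F hne u)).toReal := by rw [dist_edist]
        _ ≤ (EMetric.hausdorffEdist (F s) (F t)
              + EMetric.hausdorffEdist (F s) (F u)).toReal := ENNReal.toReal_mono hsum hle
        _ = _ := ENNReal.toReal_add hfin hfin'
  have heq : kkyF F hne s = key.choose := by rw [kkyF_eq]; exact dif_pos key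
  obtain ⟨hmem, hFs⟩ := key.choose_spec
  constructor
  · rw [heq]; exact hFs
  · intro t ht
    by_cases hfin : EMetric.hausdorffEdist (F s) (F t) = ⊤
    · simp [hfin]
    · have hball : key.choose ∈ Metric.closedBall (kkyF F hne t)
          (EMetric.hausdorffEdist (F s) (F t)).toReal := by
        have : ((kkyF F hne t, (EMetric.hausdorffEdist (F s) (F t)).toReal) : Y × ℝ)
            ∈ kkyT F s (fun t _ => kkyF F hne t) := ⟨t, ht, hfin, rfl⟩
        exact Set.mem_iInter₂.1 hmem _ this
      rw [heq]
      rw [Metric.mem_closedBall] at hball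
      calc edist key.choose (kkyF F hne t) = ENNReal.ofReal (dist key.choose (kkyF F hne t)) :=
            edist_dist _ _
        _ ≤ ENNReal.ofReal (EMetric.hausdorffEdist (F s) (F t)).toReal :=
            ENNReal.ofReal_le_ofReal hball
        _ ≤ _ := ENNReal.ofReal_toReal_le

end KKY

/-- The Khamsi–Kirk–Yanez theorem: a mapping from an arbitrary set into a
hyperconvex metric space whose values are nonempty externally hyperconvex sets
admits a singlevalued selection which is nonexpansive with respect to the
Hausdorff (extended) distance between the values. -/
theorem khamsi_kirk_yanez_selection
    {Y : Type*} [MetricSpace Y]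
    (hhyper : ∀ S : Set (Y × ℝ), (∀ p ∈ S, 0 ≤ p.2) →
      (∀ p ∈ S, ∀ q ∈ S, dist p.1 q.1 ≤ p.2 + q.2) →
      (⋂ p ∈ S, Metric.closedBall p.1 p.2).Nonempty)
    {S : Type*} (F : S → Set Y)
    (hne : ∀ s : S, (F s).Nonempty)
    (hext : ∀ s : S, ∀ T : Set (Y × ℝ),
      (∀ p ∈ T, Metric.infDist p.1 (F s) ≤ p.2) →
      (∀ p ∈ T, ∀ q ∈ T, dist p.1 q.1 ≤ p.2 + q.2) →
      ((⋂ p ∈ T, Metric.closedBall p.1 p.2) ∩ F s).Nonempty) :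
    ∃ f : S → Y, (∀ s : S, f s ∈ F s) ∧
      ∀ x y : S, edist (f x) (f y) ≤ EMetric.hausdorffEdist (F x) (F y) := by
  refine ⟨kkyF F hne, fun s => (kkyF_spec F hne hext s).1, fun x y => ?_⟩
  rcases trichotomous_of WellOrderingRel x y with h | h | h
  · rw [edist_comm, EMetric.hausdorffEdist, Metric.hausdorffEDist_comm]
    exact (kkyF_spec F hne hext y).2 x h
  · subst h; simp
  · exact (kkyF_spec F hne hext x).2 y h
end

section
/- Continuous choice of retractions onto paraconvex sets: let 0 ≤ α < 1/2, let B be a real Banach space, X a paracompact Hausdorff space, and F a multivalued mapping from X to B such that every value F(x) is a nonempty bounded α-paraconvex subset of B, and F is continuous with respect to the Hausdorff distance (for every x₀ ∈ X and ε > 0 there is a neighborhood U of x₀ with Hd(F(x), F(x₀)) < ε for all x ∈ U). Then there exists a continuous map 𝔉 : X → C_b(B,B), where C_b(B,B) is the space of bounded continuous maps from B to B with the supremum metric, such that for every x ∈ X the map 𝔉(x) : B → B is a retraction of B onto F(x), i.e. 𝔉(x)(b) ∈ F(x) for every b ∈ B and 𝔉(x)(b) = b for every b ∈ F(x). -/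
open Metric Set Filter Topology BoundedContinuousFunction Pointwise

section Engine

variable {E : Type*} [NormedAddCommGroup E] [NormedSpace ℝ E]

/-- `β`-paraconvexity of a set. -/
def ParaConv (β : ℝ) (P : Set E) : Prop :=
  ∀ r : ℝ, 0 < r → ∀ c : E, ∀ q ∈ convexHull ℝ (P ∩ Metric.ball c r), Metric.infDist q P ≤ β * r

variable {Z : Type*} [TopologicalSpace Z]

/-- Lower semicontinuity of a multivalued map, metric form. -/
def LSCm (G : Z → Set E) : Prop :=
  ∀ z₀ (e : E) (r : ℝ), (∃ p ∈ G z₀, dist p e < r) → ∀ᶠ z in 𝓝 z₀, ∃ p ∈ G z, dist p e < r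

variable [NormalSpace Z] [ParacompactSpace Z]

theorem engine_step {β γ : ℝ} (hβ0 : 0 ≤ β) (hβγ : β < γ)
    {G : Z → Set E} (hG : LSCm G) (hpc : ∀ z, ParaConv β (G z)) (hne : ∀ z, (G z).Nonempty)
    {f : Z → E} (hf : Continuous f) {ε : Z → ℝ} (hε : Continuous ε)
    (hεpos : ∀ z, 0 < ε z) (hd : ∀ z, Metric.infDist (f z) (G z) < ε z) :
    ∃ f' : Z → E, Continuous f' ∧
      ∀ z, dist (f' z) (f z) ≤ ε z ∧ Metric.infDist (f' z) (G z) < γ * ε z := by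
  set μ : ℝ := (γ - β) / (β + 2) with hμdef
  have h2 : (0:ℝ) < β + 2 := by linarith
  have hμ : 0 < μ := div_pos (by linarith) h2
  have hmul : μ * (β + 2) = γ - β := by rw [hμdef]; exact div_mul_cancel₀ _ (ne_of_gt h2)
  have hexp : μ * β + 2 * μ = γ - β := by nlinarith [hmul]
  have hkey : β * (1 + μ) + μ < γ := by nlinarith [hexp, hμ]
  set S : Z → Set E := fun y => {p | dist p (f y) < ε y ∧ ∃ q ∈ G y, dist p q < μ * ε y} with hSdef
  set t : Z → Set E := fun y => convexHull ℝ (S y) with htdef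
  have H : ∀ z₀ : Z, ∃ c : E, ∀ᶠ y in 𝓝 z₀, c ∈ t y := by
    intro z₀
    obtain ⟨e₀, he₀G, he₀d⟩ := (Metric.infDist_lt_iff (hne z₀)).1 (hd z₀)
    refine ⟨e₀, ?_⟩
    have h1 : ∀ᶠ y in 𝓝 z₀, dist e₀ (f y) < ε y := by
      have : IsOpen {y | dist e₀ (f y) < ε y} :=
        isOpen_lt (continuous_const.dist hf) hε
      exact this.mem_nhds (by simpa [dist_comm] using he₀d)
    have h2' : ∀ᶠ y in 𝓝 z₀, ε z₀ < 2 * ε y := by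
      have : IsOpen {y | ε z₀ < 2 * ε y} := isOpen_lt continuous_const (continuous_const.mul hε)
      exact this.mem_nhds (by simpa using lt_two_mul_self (hεpos z₀))
    have h3 : ∀ᶠ y in 𝓝 z₀, ∃ p ∈ G y, dist p e₀ < μ / 2 * ε z₀ := by
      refine hG z₀ e₀ (μ / 2 * ε z₀) ⟨e₀, he₀G, ?_⟩
      simp only [dist_self]
      exact mul_pos (by linarith) (hεpos z₀)
    filter_upwards [h1, h2', h3] with y hy1 hy2 hy3
    obtain ⟨p, hpG, hpd⟩ := hy3
    refine subset_convexHull ℝ _ ⟨hy1, p, hpG, ?_⟩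
    have : μ / 2 * ε z₀ < μ * ε y := by nlinarith [hμ]
    calc dist e₀ p = dist p e₀ := dist_comm _ _
      _ < μ / 2 * ε z₀ := hpd
      _ < μ * ε y := this
  obtain ⟨g, hg⟩ := exists_continuous_forall_mem_convex_of_local_const
    (fun y => convex_convexHull ℝ (S y)) H
  refine ⟨⇑g, g.continuous, fun z => ?_⟩
  have hS₁ : t z ⊆ closedBall (f z) (ε z) := by
    refine convexHull_min (fun p hp => ?_) (convex_closedBall _ _)
    exact mem_closedBall.2 (le_of_lt hp.1)
  have hd1 : dist (g z) (f z) ≤ ε z := mem_closedBall.1 (hS₁ (hg z))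
  refine ⟨hd1, ?_⟩
  -- second estimate
  set A : Set E := convexHull ℝ (G z ∩ ball (f z) ((1 + μ) * ε z)) with hAdef
  have hS₂ : t z ⊆ A + closedBall (0 : E) (μ * ε z) := by
    refine convexHull_min (fun p hp => ?_)
      ((convex_convexHull ℝ _).add (convex_closedBall _ _))
    obtain ⟨hpf, q, hqG, hpq⟩ := hp
    have hq : q ∈ G z ∩ ball (f z) ((1 + μ) * ε z) := by
      refine ⟨hqG, mem_ball.2 ?_⟩
      calc dist q (f z) ≤ dist q p + dist p (f z) := dist_triangle _ _ _
        _ < μ * ε z + ε z := by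
            have := hpf
            have h' : dist q p < μ * ε z := by rwa [dist_comm]
            linarith
        _ = (1 + μ) * ε z := by ring
    refine ⟨q, subset_convexHull ℝ _ hq, p - q, ?_, by simp⟩
    simpa [mem_closedBall, dist_eq_norm, ← dist_eq_norm] using le_of_lt hpq
  obtain ⟨a, ha, w, hw, hsum⟩ := hS₂ (hg z)
  have hIa : Metric.infDist a (G z) ≤ β * ((1 + μ) * ε z) :=
    hpc z ((1 + μ) * ε z) (mul_pos (by linarith) (hεpos z)) (f z) a ha
  have hwn : ‖w‖ ≤ μ * ε z := by simpa [mem_closedBall, dist_eq_norm] using hw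
  have : Metric.infDist (g z) (G z) ≤ Metric.infDist a (G z) + dist (g z) a :=
    Metric.infDist_le_infDist_add_dist
  have hga : dist (g z) a = ‖w‖ := by
    rw [← hsum, dist_eq_norm, add_sub_cancel_left]
  calc Metric.infDist (g z) (G z) ≤ β * ((1 + μ) * ε z) + ‖w‖ := by
        rw [hga] at this; linarith
    _ ≤ β * ((1 + μ) * ε z) + μ * ε z := by linarith
    _ = (β * (1 + μ) + μ) * ε z := by ring
    _ < γ * ε z := by
        have := hεpos z
        nlinarith [hkey]

theorem engine_iterate [CompleteSpace E] {β γ : ℝ} (hβ0 : 0 ≤ β) (hβγ : β < γ) (hγ1 : γ < 1)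
    {G : Z → Set E} (hG : LSCm G) (hpc : ∀ z, ParaConv β (G z)) (hne : ∀ z, (G z).Nonempty)
    (hcl : ∀ z, IsClosed (G z))
    {f : Z → E} (hf : Continuous f) {ε : Z → ℝ} (hε : Continuous ε)
    (hεpos : ∀ z, 0 < ε z) (hd : ∀ z, Metric.infDist (f z) (G z) < ε z) :
    ∃ H : Z → E, Continuous H ∧ ∀ z, H z ∈ G z ∧ dist (H z) (f z) ≤ ε z / (1 - γ) := by
  have hγ0 : 0 < γ := lt_of_le_of_lt hβ0 hβγ
  have key : ∀ (n : ℕ) (g : Z → E), Continuous g → (∀ z, Metric.infDist (g z) (G z) < γ ^ n * ε z) →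
      ∃ g' : Z → E, Continuous g' ∧
        ∀ z, dist (g' z) (g z) ≤ γ ^ n * ε z ∧ Metric.infDist (g' z) (G z) < γ ^ (n+1) * ε z := by
    intro n g hg hgd
    obtain ⟨g', h1, h2⟩ := engine_step hβ0 hβγ hG hpc hne hg
      (ε := fun z => γ ^ n * ε z) (continuous_const.mul hε)
      (fun z => mul_pos (pow_pos hγ0 n) (hεpos z)) hgd
    exact ⟨g', h1, fun z => ⟨(h2 z).1, by
      have := (h2 z).2
      calc Metric.infDist (g' z) (G z) < γ * (γ ^ n * ε z) := this
        _ = γ ^ (n+1) * ε z := by ring⟩⟩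
  let T : (n : ℕ) → {g : Z → E // Continuous g ∧ ∀ z, Metric.infDist (g z) (G z) < γ ^ n * ε z} :=
    fun n => Nat.rec ⟨f, hf, by simpa using hd⟩
      (fun n p => ⟨(key n p.1 p.2.1 p.2.2).choose, (key n p.1 p.2.1 p.2.2).choose_spec.1,
        fun z => ((key n p.1 p.2.1 p.2.2).choose_spec.2 z).2⟩) n
  have Tstep : ∀ n z, dist ((T (n+1)).1 z) ((T n).1 z) ≤ γ ^ n * ε z :=
    fun n z => ((key n (T n).1 (T n).2.1 (T n).2.2).choose_spec.2 z).1
  set g : ℕ → Z → E := fun n => (T n).1 with hgdef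
  have hstep : ∀ n z, dist (g n z) (g (n+1) z) ≤ ε z * γ ^ n := by
    intro n z; rw [dist_comm]; simpa [mul_comm] using Tstep n z
  have hcau : ∀ z, CauchySeq fun n => g n z :=
    fun z => cauchySeq_of_le_geometric γ (ε z) hγ1 (hstep · z)
  have hex : ∀ z, ∃ l, Tendsto (fun n => g n z) atTop (𝓝 l) :=
    fun z => cauchySeq_tendsto_of_complete (hcau z)
  choose H hH using hex
  have hdl : ∀ n z, dist (g n z) (H z) ≤ ε z * γ ^ n / (1 - γ) :=
    fun n z => dist_le_of_le_geometric_of_tendsto γ (ε z) hγ1 (hstep · z) (hH z) n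
  refine ⟨H, ?_, fun z => ⟨?_, ?_⟩⟩
  · -- continuity via locally uniform convergence
    have hTLU : TendstoLocallyUniformly g H atTop := by
      rw [Metric.tendstoLocallyUniformly_iff]
      intro δ hδ z₀
      refine ⟨{z | ε z < ε z₀ + 1}, (isOpen_lt hε continuous_const).mem_nhds (by simp), ?_⟩
      have hto : Tendsto (fun n : ℕ => (ε z₀ + 1) * γ ^ n / (1 - γ)) atTop (𝓝 0) := by
        have h0 : Tendsto (fun n : ℕ => γ ^ n) atTop (𝓝 0) :=
          tendsto_pow_atTop_nhds_zero_of_lt_one (le_of_lt hγ0) hγ1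
        have := (h0.const_mul (ε z₀ + 1)).div_const (1 - γ)
        simpa using this
      have hevent : ∀ᶠ n in atTop, (ε z₀ + 1) * γ ^ n / (1 - γ) < δ := by
        have := hto.eventually (eventually_lt_nhds hδ)
        simpa using this
      filter_upwards [hevent] with n hn z hz
      have h1 : dist (H z) (g n z) ≤ ε z * γ ^ n / (1 - γ) := by
        rw [dist_comm]; exact hdl n z
      have h2 : ε z * γ ^ n / (1 - γ) ≤ (ε z₀ + 1) * γ ^ n / (1 - γ) := by
        have hz' : ε z ≤ ε z₀ + 1 := le_of_lt hz
        have h1γ : (0:ℝ) < 1 - γ := by linarith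
        exact (div_le_div_iff_of_pos_right h1γ).2
          (mul_le_mul_of_nonneg_right hz' (pow_nonneg hγ0.le n))
      linarith
    exact hTLU.continuous (Eventually.of_forall fun n => (T n).2.1).frequently
  · -- membership
    have hb : ∀ n : ℕ, Metric.infDist (H z) (G z) ≤ γ ^ n * ε z + ε z * γ ^ n / (1 - γ) := by
      intro n
      calc Metric.infDist (H z) (G z)
          ≤ Metric.infDist (g n z) (G z) + dist (H z) (g n z) :=
            Metric.infDist_le_infDist_add_dist
        _ ≤ γ ^ n * ε z + ε z * γ ^ n / (1 - γ) := by
            have := (T n).2.2 z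
            have h2 := hdl n z
            rw [dist_comm] at h2
            linarith
    have hto : Tendsto (fun n : ℕ => γ ^ n * ε z + ε z * γ ^ n / (1 - γ)) atTop (𝓝 0) := by
      have h0 : Tendsto (fun n : ℕ => γ ^ n) atTop (𝓝 0) :=
        tendsto_pow_atTop_nhds_zero_of_lt_one (le_of_lt hγ0) hγ1
      have heq : (fun n : ℕ => γ ^ n * ε z + ε z * γ ^ n / (1 - γ))
          = fun n : ℕ => γ ^ n * (ε z + ε z / (1 - γ)) := by
        funext n; ring
      rw [heq]
      simpa using h0.mul_const (ε z + ε z / (1 - γ))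
    have : Metric.infDist (H z) (G z) ≤ 0 := ge_of_tendsto' hto hb
    have h0 : Metric.infDist (H z) (G z) = 0 :=
      le_antisymm this Metric.infDist_nonneg
    exact ((hcl z).mem_iff_infDist_zero (hne z)).2 h0
  · have := hdl 0 z
    rw [dist_comm] at this
    have h' : dist (H z) (f z) ≤ ε z * γ ^ 0 / (1 - γ) := this
    simpa using h'
end Engine

/-- Pushing a map into a fixed paraconvex set, with control proportional to a
possibly-vanishing bound on the distance. -/
theorem engine_push {E : Type*} [NormedAddCommGroup E] [NormedSpace ℝ E] [CompleteSpace E]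
    {Z : Type*} [MetricSpace Z]
    {β γ δ : ℝ} (hβ0 : 0 ≤ β) (hβγ : β < γ) (hγ1 : γ < 1) (hδ : 0 < δ)
    {P : Set E} (hPne : P.Nonempty) (hPcl : IsClosed P) (hpc : ParaConv β P)
    {f : Z → E} (hf : Continuous f) {ε : Z → ℝ} (hε : Continuous ε)
    (hε0 : ∀ z, 0 ≤ ε z) (hd : ∀ z, Metric.infDist (f z) P ≤ ε z) :
    ∃ H : Z → E, Continuous H ∧
      ∀ z, H z ∈ P ∧ dist (H z) (f z) ≤ (1 + δ) / (1 - γ) * ε z := by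
  have h1γ : (0:ℝ) < 1 - γ := by linarith
  obtain ⟨Hp, hHpc, hHp⟩ := engine_iterate (Z := {z : Z // 0 < ε z}) hβ0 hβγ hγ1
    (G := fun _ => P) (fun z₀ e r h => Eventually.of_forall fun _ => h)
    (fun _ => hpc) (fun _ => hPne) (fun _ => hPcl)
    (f := fun z => f z.1) (hf.comp continuous_subtype_val)
    (ε := fun z => (1 + δ) * ε z.1) (continuous_const.mul (hε.comp continuous_subtype_val))
    (fun z => mul_pos (by linarith) z.2)
    (fun z => lt_of_le_of_lt (hd z.1) (by show ε z.1 < (1 + δ) * ε z.1; nlinarith [z.2, hδ]))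
  classical
  refine ⟨fun z => if h : 0 < ε z then Hp ⟨z, h⟩ else f z, ?_, fun z => ?_⟩
  · rw [continuous_iff_continuousAt]
    intro z₀
    by_cases h₀ : 0 < ε z₀
    · have hO : IsOpen {z : Z | 0 < ε z} := isOpen_lt continuous_const hε
      have hrestr : ContinuousOn (fun z => if h : 0 < ε z then Hp ⟨z, h⟩ else f z) {z | 0 < ε z} := by
        rw [continuousOn_iff_continuous_restrict]
        have : (Set.restrict {z : Z | 0 < ε z} fun z => if h : 0 < ε z then Hp ⟨z, h⟩ else f z)
            = fun z => Hp ⟨z.1, z.2⟩ := by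
          funext z; exact dif_pos z.2
        show Continuous (Set.restrict {z : Z | 0 < ε z} fun z => if h : 0 < ε z then Hp ⟨z, h⟩ else f z)
        rw [this]
        exact hHpc.comp (by fun_prop)
      exact hrestr.continuousAt (hO.mem_nhds h₀)
    · have hε₀ : ε z₀ = 0 := le_antisymm (not_lt.1 h₀) (hε0 z₀)
      have hmem : f z₀ ∈ P := by
        have : Metric.infDist (f z₀) P = 0 :=
          le_antisymm (by rw [← hε₀]; exact hd z₀) Metric.infDist_nonneg
        exact (hPcl.mem_iff_infDist_zero hPne).2 this
      have hbound : ∀ z, dist (if h : 0 < ε z then Hp ⟨z, h⟩ else f z) (f z)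
          ≤ (1 + δ) / (1 - γ) * ε z := by
        intro z
        by_cases h : 0 < ε z
        · rw [dif_pos h]
          have := (hHp ⟨z, h⟩).2
          calc dist (Hp ⟨z, h⟩) (f z) ≤ (1 + δ) * ε z / (1 - γ) := this
            _ = (1 + δ) / (1 - γ) * ε z := by ring
        · rw [dif_neg h, dist_self]
          have : ε z = 0 := le_antisymm (not_lt.1 h) (hε0 z)
          rw [this]; simp
      have hval : (if h : 0 < ε z₀ then Hp ⟨z₀, h⟩ else f z₀) = f z₀ := dif_neg h₀
      rw [ContinuousAt, hval]
      rw [Metric.tendsto_nhds]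
      intro η hη
      have hC : 0 < (1 + δ) / (1 - γ) := by positivity
      have h1 : ∀ᶠ z in 𝓝 z₀, ε z < η / 2 / ((1 + δ) / (1 - γ)) := by
        have : Tendsto ε (𝓝 z₀) (𝓝 (ε z₀)) := hε.continuousAt
        rw [hε₀] at this
        exact this.eventually (eventually_lt_nhds (by positivity))
      have h2 : ∀ᶠ z in 𝓝 z₀, dist (f z) (f z₀) < η / 2 :=
        (hf.tendsto z₀).eventually (Metric.ball_mem_nhds _ (by positivity))
      filter_upwards [h1, h2] with z hz1 hz2
      calc dist (if h : 0 < ε z then Hp ⟨z, h⟩ else f z) (f z₀)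
          ≤ dist (if h : 0 < ε z then Hp ⟨z, h⟩ else f z) (f z) + dist (f z) (f z₀) :=
            dist_triangle _ _ _
        _ ≤ (1 + δ) / (1 - γ) * ε z + dist (f z) (f z₀) := by linarith [hbound z]
        _ < η := by
            have : (1 + δ) / (1 - γ) * ε z < η / 2 := by
              calc (1 + δ) / (1 - γ) * ε z < (1 + δ) / (1 - γ) * (η / 2 / ((1 + δ) / (1 - γ))) := by
                    exact mul_lt_mul_of_pos_left hz1 hC
                _ = η / 2 := by rw [mul_comm, div_mul_cancel₀ _ (ne_of_gt hC)]
            linarith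
  · dsimp only
    by_cases h : 0 < ε z
    · rw [dif_pos h]
      refine ⟨(hHp ⟨z, h⟩).1, ?_⟩
      calc dist (Hp ⟨z, h⟩) (f z) ≤ (1 + δ) * ε z / (1 - γ) := (hHp ⟨z, h⟩).2
        _ = (1 + δ) / (1 - γ) * ε z := by ring
    · have hεz : ε z = 0 := le_antisymm (not_lt.1 h) (hε0 z)
      have hmem : f z ∈ P := by
        have : Metric.infDist (f z) P = 0 :=
          le_antisymm (by rw [← hεz]; exact hd z) Metric.infDist_nonneg
        exact (hPcl.mem_iff_infDist_zero hPne).2 this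
      rw [dif_neg h, dist_self]
      exact ⟨hmem, by rw [hεz]; simp⟩


theorem le_infDist_of {E : Type*} [PseudoMetricSpace E] {s : Set E} (hs : s.Nonempty)
    {x : E} {c : ℝ} (h : ∀ y ∈ s, c ≤ dist x y) : c ≤ Metric.infDist x s := by
  by_contra hc
  push_neg at hc
  obtain ⟨y, hy, hxy⟩ := (Metric.infDist_lt_iff hs).1 hc
  exact absurd hxy (not_lt.2 (h y hy))

section Bside
variable {B : Type*} [NormedAddCommGroup B] [NormedSpace ℝ B] [CompleteSpace B]

/-- A controlled retraction onto a fixed paraconvex set. -/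
theorem exists_controlled_retraction
    {α γ δ : ℝ} (hα0 : 0 ≤ α) (hαγ : α < γ) (hγ1 : γ < 1) (hδ : 0 < δ)
    {P : Set B} (hPne : P.Nonempty) (hPcl : IsClosed P) (hPbdd : Bornology.IsBounded P)
    (hpara : ParaConv α P) :
    ∃ h : B → B, Continuous h ∧
      ∀ b, h b ∈ P ∧ dist (h b) b ≤ ((1 + δ) / (1 - γ) + 1) * Metric.infDist b P := by
  obtain ⟨s₀, hs₀⟩ := hPne
  set d : ℝ := Metric.diam P with hddef
  have hd0 : 0 ≤ d := Metric.diam_nonneg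
  set R : ℝ := 2 * d + 1 with hRdef
  have hR0 : 0 < R := by linarith
  have hdR : d ≤ R := by linarith
  set T : B → B := fun b => s₀ + (R / max R (dist b s₀)) • (b - s₀) with hTdef
  have hmaxpos : ∀ b : B, 0 < max R (dist b s₀) := fun b => lt_max_of_lt_left hR0
  have hTcont : Continuous T := by
    apply continuous_const.add
    apply Continuous.smul
    · exact continuous_const.div (continuous_const.max (continuous_id.dist continuous_const))
        (fun b => ne_of_gt (hmaxpos b))
    · exact continuous_id.sub continuous_const
  have hlam1 : ∀ b : B, R / max R (dist b s₀) ≤ 1 := by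
    intro b
    rw [div_le_one (hmaxpos b)]
    exact le_max_left _ _
  have hlam0 : ∀ b : B, 0 < R / max R (dist b s₀) := fun b => div_pos hR0 (hmaxpos b)
  -- distance from b to P is at least dist b s₀ - d
  have hlow : ∀ b : B, dist b s₀ - d ≤ Metric.infDist b P := by
    intro b
    apply le_infDist_of ⟨s₀, hs₀⟩
    intro p hp
    have h1 : dist p s₀ ≤ d := Metric.dist_le_diam_of_mem hPbdd hp hs₀
    have h2 := dist_triangle b p s₀
    linarith
  -- T moves by at most the distance to P
  have hTb : ∀ b : B, dist (T b) b ≤ Metric.infDist b P := by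
    intro b
    rcases le_or_gt (dist b s₀) R with hbR | hbR
    · have : max R (dist b s₀) = R := max_eq_left hbR
      have hT : T b = b := by
        rw [hTdef]; dsimp only; rw [this, div_self (ne_of_gt hR0), one_smul]; abel
      rw [hT, dist_self]; exact Metric.infDist_nonneg
    · have hmax : max R (dist b s₀) = dist b s₀ := max_eq_right (le_of_lt hbR)
      have hρ : 0 < dist b s₀ := lt_trans hR0 hbR
      have hdist : dist (T b) b = dist b s₀ - R := by
        rw [hTdef]; dsimp only
        rw [hmax, dist_eq_norm]
        have : s₀ + (R / dist b s₀) • (b - s₀) - b = -((1 - R / dist b s₀) • (b - s₀)) := by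
          rw [sub_smul, one_smul]; abel
        rw [this, norm_neg, norm_smul, Real.norm_eq_abs]
        rw [abs_of_nonneg (by rw [sub_nonneg, div_le_one hρ]; exact le_of_lt hbR)]
        rw [← dist_eq_norm, sub_mul, one_mul, div_mul_cancel₀ _ (ne_of_gt hρ)]
      rw [hdist]
      have := hlow b
      linarith
  -- T does not increase distance to P
  have hTd : ∀ b : B, Metric.infDist (T b) P ≤ Metric.infDist b P := by
    intro b
    rcases le_or_gt (dist b s₀) R with hbR | hbR
    · have : max R (dist b s₀) = R := max_eq_left hbR
      have hT : T b = b := by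
        rw [hTdef]; dsimp only; rw [this, div_self (ne_of_gt hR0), one_smul]; abel
      rw [hT]
    · have hmax : max R (dist b s₀) = dist b s₀ := max_eq_right (le_of_lt hbR)
      have hρ : 0 < dist b s₀ := lt_trans hR0 hbR
      set lam : ℝ := R / dist b s₀ with hlamdef
      have hlam01 : 0 < lam := div_pos hR0 hρ
      have hlam11 : lam ≤ 1 := by rw [hlamdef, div_le_one hρ]; exact le_of_lt hbR
      apply le_infDist_of ⟨s₀, hs₀⟩
      intro p hp
      -- dist (T b) p ≤ dist b p, then infDist (T b) P ≤ dist b p... we need c ≤ dist b p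
      -- here c := infDist (T b) P
      have hdecomp : T b - p = lam • (b - p) + (1 - lam) • (s₀ - p) := by
        rw [hTdef]; dsimp only; rw [hmax, ← hlamdef]
        module
      have hps₀ : dist s₀ p ≤ d := Metric.dist_le_diam_of_mem hPbdd hs₀ hp
      have hbp : d ≤ dist b p := by
        have h1 : dist p s₀ ≤ d := Metric.dist_le_diam_of_mem hPbdd hp hs₀
        have h2 := dist_triangle b p s₀
        have : dist b s₀ - d ≤ dist b p := by linarith
        linarith [hdR, this, hbR]
      have hTp : dist (T b) p ≤ dist b p := by
        rw [dist_eq_norm, hdecomp]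
        calc ‖lam • (b - p) + (1 - lam) • (s₀ - p)‖
            ≤ ‖lam • (b - p)‖ + ‖(1 - lam) • (s₀ - p)‖ := norm_add_le _ _
          _ = lam * dist b p + (1 - lam) * dist s₀ p := by
              rw [norm_smul, norm_smul, Real.norm_eq_abs, Real.norm_eq_abs,
                abs_of_pos hlam01, abs_of_nonneg (by linarith), ← dist_eq_norm, ← dist_eq_norm]
          _ ≤ lam * dist b p + (1 - lam) * dist b p := by
              have : dist s₀ p ≤ dist b p := le_trans hps₀ hbp
              nlinarith [this, hlam11]
          _ = dist b p := by ring
      exact le_trans (Metric.infDist_le_dist_of_mem hp) hTp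
  -- now push T into P
  obtain ⟨H, hHc, hH⟩ := engine_push hα0 hαγ hγ1 hδ ⟨s₀, hs₀⟩ hPcl hpara hTcont
    (ε := fun b => Metric.infDist (T b) P) ((Metric.continuous_infDist_pt P).comp hTcont)
    (fun b => Metric.infDist_nonneg) (fun b => le_refl _)
  refine ⟨H, hHc, fun b => ⟨(hH b).1, ?_⟩⟩
  have h1 := (hH b).2
  have h2 := hTd b
  have h3 := hTb b
  have hC : 0 ≤ (1 + δ) / (1 - γ) := div_nonneg (by linarith) (by linarith)
  calc dist (H b) b ≤ dist (H b) (T b) + dist (T b) b := dist_triangle _ _ _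
    _ ≤ (1 + δ) / (1 - γ) * Metric.infDist (T b) P + Metric.infDist b P := by linarith
    _ ≤ (1 + δ) / (1 - γ) * Metric.infDist b P + Metric.infDist b P := by nlinarith
    _ = ((1 + δ) / (1 - γ) + 1) * Metric.infDist b P := by ring

/-- The set of retractions of `B` onto `P`, vanishing near `P`, inside `C_b(B,B)`. -/
def CC (P : Set B) : Set (B →ᵇ B) :=
  {f | (∀ b, f b ∈ P) ∧ ∀ η : ℝ, 0 < η → ∃ s : ℝ, 0 < s ∧
    ∀ b, Metric.infDist b P ≤ s → dist (f b) b ≤ η}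

theorem CC_fix {P : Set B} {f : B →ᵇ B} (hf : f ∈ CC P) {b : B} (hb : b ∈ P) : f b = b := by
  have h0 : Metric.infDist b P = 0 := Metric.infDist_zero_of_mem hb
  have : dist (f b) b ≤ 0 := by
    by_contra hd
    push_neg at hd
    obtain ⟨s, hs, hsp⟩ := hf.2 (dist (f b) b / 2) (by linarith)
    have := hsp b (by rw [h0]; exact le_of_lt hs)
    linarith
  exact dist_le_zero.1 this

/-- Build a bounded continuous function from one with values in a bounded set. -/
noncomputable def mkBCF {P : Set B} (hPbdd : Bornology.IsBounded P) {h : B → B}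
    (hc : Continuous h) (hmem : ∀ b, h b ∈ P) : B →ᵇ B :=
  BoundedContinuousFunction.mkOfBound ⟨h, hc⟩
    (Metric.isBounded_iff.1 hPbdd).choose
    (fun x y => (Metric.isBounded_iff.1 hPbdd).choose_spec (hmem x) (hmem y))

@[simp] theorem mkBCF_apply {P : Set B} (hPbdd : Bornology.IsBounded P) {h : B → B}
    (hc : Continuous h) (hmem : ∀ b, h b ∈ P) (b : B) : mkBCF hPbdd hc hmem b = h b := rfl

theorem CC_nonempty {α γ δ : ℝ} (hα0 : 0 ≤ α) (hαγ : α < γ) (hγ1 : γ < 1) (hδ : 0 < δ)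
    {P : Set B} (hPne : P.Nonempty) (hPcl : IsClosed P) (hPbdd : Bornology.IsBounded P)
    (hpara : ParaConv α P) : (CC P).Nonempty := by
  obtain ⟨h, hc, hh⟩ := exists_controlled_retraction hα0 hαγ hγ1 hδ hPne hPcl hPbdd hpara
  set M : ℝ := (1 + δ) / (1 - γ) + 1 with hMdef
  have hM : 0 < M := by
    rw [hMdef]
    have : (0:ℝ) ≤ (1 + δ) / (1 - γ) := div_nonneg (by linarith) (by linarith)
    linarith
  refine ⟨mkBCF hPbdd hc (fun b => (hh b).1), fun b => (hh b).1, fun η hη => ⟨η / M, div_pos hη hM,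
    fun b hb => ?_⟩⟩
  calc dist (h b) b ≤ M * Metric.infDist b P := (hh b).2
    _ ≤ M * (η / M) := mul_le_mul_of_nonneg_left hb (le_of_lt hM)
    _ = η := by rw [mul_comm, div_mul_cancel₀ _ (ne_of_gt hM)]

theorem CC_closed {P : Set B} (hPcl : IsClosed P) : IsClosed (CC P) := by
  apply IsSeqClosed.isClosed
  intro fseq f hmem hlim
  constructor
  · intro b
    have htend : Tendsto (fun n => fseq n b) atTop (𝓝 (f b)) := by
      rw [tendsto_iff_dist_tendsto_zero]
      apply squeeze_zero (fun n => dist_nonneg)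
        (fun n => BoundedContinuousFunction.dist_coe_le_dist b)
      rwa [← tendsto_iff_dist_tendsto_zero]
    exact hPcl.mem_of_tendsto htend (Eventually.of_forall fun n => (hmem n).1 b)
  · intro η hη
    have : ∀ᶠ n in atTop, dist (fseq n) f < η / 2 :=
      (tendsto_iff_dist_tendsto_zero.1 hlim).eventually (eventually_lt_nhds (by linarith))
    obtain ⟨n, hn⟩ := this.exists
    obtain ⟨s, hs, hsp⟩ := (hmem n).2 (η / 2) (by linarith)
    refine ⟨s, hs, fun b hb => ?_⟩
    calc dist (f b) b ≤ dist (f b) (fseq n b) + dist (fseq n b) b := dist_triangle _ _ _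
      _ ≤ dist (f) (fseq n) + η / 2 := by
          have h1 : dist (f b) (fseq n b) ≤ dist f (fseq n) :=
            BoundedContinuousFunction.dist_coe_le_dist b
          have h2 := hsp b hb
          linarith
      _ ≤ η := by rw [dist_comm]; linarith

theorem CC_paraconv {α γ δ : ℝ} (hα0 : 0 ≤ α) (hαγ : α < γ) (hγ1 : γ < 1) (hδ : 0 < δ)
    {P : Set B} (hPne : P.Nonempty) (hPcl : IsClosed P) (hPbdd : Bornology.IsBounded P)
    (hpara : ParaConv α P) :
    ParaConv ((1 + δ) / (1 - γ) * α) (CC P) := by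
  intro r hr g₀ q hq
  set C : ℝ := (1 + δ) / (1 - γ) with hCdef
  have hC : 0 < C := by rw [hCdef]; exact div_pos (by linarith) (by linarith)
  rw [convexHull_eq] at hq
  obtain ⟨ι, t, w, fz, hw0, hw1, hfz, hqeq⟩ := hq
  have htne : t.Nonempty := by
    rcases Finset.eq_empty_or_nonempty t with h | h
    · exfalso; rw [h] at hw1; simp at hw1
    · exact h
  have hqsum : q = ∑ i ∈ t, w i • fz i := by
    rw [← hqeq, Finset.centerMass_eq_of_sum_1 _ _ hw1]
  have hqb : ∀ b, q b = ∑ i ∈ t, w i • fz i b := by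
    intro b; rw [hqsum]; simp
  -- pointwise membership in the convex hull
  have hmemhull : ∀ b, q b ∈ convexHull ℝ (P ∩ Metric.ball (g₀ b) r) := by
    intro b
    rw [hqb b]
    refine (convex_convexHull ℝ _).sum_mem (fun i hi => hw0 i hi) hw1 (fun i hi => ?_)
    refine subset_convexHull ℝ _ ⟨((hfz i hi).1 : fz i ∈ CC P).1 b, mem_ball.2 ?_⟩
    calc dist (fz i b) (g₀ b) ≤ dist (fz i) g₀ := BoundedContinuousFunction.dist_coe_le_dist b
      _ < r := mem_ball.1 (hfz i hi).2
  have hqd : ∀ b, Metric.infDist (q b) P ≤ α * r := fun b => hpara r hr (g₀ b) (q b) (hmemhull b)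
  -- modulus of q
  have hOm : ∀ η : ℝ, 0 < η → ∃ s : ℝ, 0 < s ∧ ∀ b, Metric.infDist b P ≤ s →
      dist (q b) b ≤ η := by
    intro η hη
    have hchoice : ∀ i ∈ t, ∃ s : ℝ, 0 < s ∧ ∀ b, Metric.infDist b P ≤ s →
        dist (fz i b) b ≤ η := fun i hi => (hfz i hi).1.2 η hη
    choose! sfun hs1 hs2 using hchoice
    refine ⟨t.inf' htne sfun, ?_, fun b hb => ?_⟩
    · rw [Finset.lt_inf'_iff]
      exact fun i hi => hs1 i hi
    · have hble : ∀ i ∈ t, Metric.infDist b P ≤ sfun i :=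
        fun i hi => le_trans hb (Finset.inf'_le sfun hi)
      have hdib : ∀ i ∈ t, dist (fz i b) b ≤ η := fun i hi => hs2 i hi b (hble i hi)
      rw [hqb b, dist_eq_norm]
      have hsplit : ∑ i ∈ t, w i • (fz i b - b) = (∑ i ∈ t, w i • fz i b) - b := by
        simp only [smul_sub, Finset.sum_sub_distrib, ← Finset.sum_smul, hw1, one_smul]
      calc ‖∑ i ∈ t, w i • fz i b - b‖ = ‖∑ i ∈ t, w i • (fz i b - b)‖ := by rw [hsplit]
        _ ≤ ∑ i ∈ t, ‖w i • (fz i b - b)‖ := norm_sum_le _ _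
        _ ≤ ∑ i ∈ t, w i * η := by
            refine Finset.sum_le_sum (fun i hi => ?_)
            rw [norm_smul, Real.norm_eq_abs, abs_of_nonneg (hw0 i hi)]
            exact mul_le_mul_of_nonneg_left (by rw [← dist_eq_norm]; exact hdib i hi) (hw0 i hi)
        _ = η := by rw [← Finset.sum_mul, hw1, one_mul]
  -- push q into P
  obtain ⟨H, hHc, hH⟩ := engine_push hα0 hαγ hγ1 hδ hPne hPcl hpara
    (f := fun b => q b) q.continuous
    (ε := fun b => Metric.infDist (q b) P)
    ((Metric.continuous_infDist_pt P).comp q.continuous)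
    (fun b => Metric.infDist_nonneg) (fun b => le_refl _)
  set Hb : B →ᵇ B := mkBCF hPbdd hHc (fun b => (hH b).1) with hHbdef
  have hHmem : Hb ∈ CC P := by
    refine ⟨fun b => (hH b).1, fun η hη => ?_⟩
    have hC1 : (0:ℝ) < 2 * (C + 1) := by linarith
    obtain ⟨s, hs, hsp⟩ := hOm (η / (2 * (C + 1))) (div_pos hη hC1)
    refine ⟨min s (η / (2 * (C + 1))), lt_min hs (div_pos hη hC1), fun b hb => ?_⟩
    have hb1 : Metric.infDist b P ≤ s := le_trans hb (min_le_left _ _)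
    have hb2 : Metric.infDist b P ≤ η / (2 * (C + 1)) := le_trans hb (min_le_right _ _)
    have hq1 : dist (q b) b ≤ η / (2 * (C + 1)) := hsp b hb1
    have hq2 : Metric.infDist (q b) P ≤ Metric.infDist b P + dist (q b) b :=
      Metric.infDist_le_infDist_add_dist
    have hq3 : dist (H b) (q b) ≤ C * Metric.infDist (q b) P := (hH b).2
    have e0 : dist (H b) (q b) ≤ C * (Metric.infDist b P + dist (q b) b) :=
      le_trans hq3 (mul_le_mul_of_nonneg_left hq2 hC.le)
    have e1 : C * Metric.infDist b P ≤ C * (η / (2 * (C + 1))) :=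
      mul_le_mul_of_nonneg_left hb2 hC.le
    have e2 : (C + 1) * dist (q b) b ≤ (C + 1) * (η / (2 * (C + 1))) :=
      mul_le_mul_of_nonneg_left hq1 (by linarith)
    have e3 : (2 * C + 2) * (η / (2 * (C + 1))) = η := by
      field_simp
    have e4 : (0:ℝ) ≤ η / (2 * (C + 1)) := le_of_lt (div_pos hη hC1)
    calc dist (Hb b) b ≤ dist (H b) (q b) + dist (q b) b := dist_triangle _ _ _
      _ ≤ C * (Metric.infDist b P + dist (q b) b) + dist (q b) b := by linarith
      _ = C * Metric.infDist b P + (C + 1) * dist (q b) b := by ring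
      _ ≤ C * (η / (2 * (C + 1))) + (C + 1) * (η / (2 * (C + 1))) := by linarith
      _ ≤ η := by nlinarith [e3, e4]
  have hfinal : dist q Hb ≤ C * α * r := by
    rw [BoundedContinuousFunction.dist_le (mul_nonneg (mul_nonneg hC.le hα0) hr.le)]
    intro b
    calc dist (q b) (Hb b) = dist (H b) (q b) := by rw [dist_comm]; rfl
      _ ≤ C * Metric.infDist (q b) P := (hH b).2
      _ ≤ C * (α * r) := mul_le_mul_of_nonneg_left (hqd b) (le_of_lt hC)
      _ = C * α * r := by ring
  calc Metric.infDist q (CC P) ≤ dist q Hb := Metric.infDist_le_dist_of_mem hHmem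
    _ ≤ C * α * r := hfinal
    _ = (1 + δ) / (1 - γ) * α * r := by rw [hCdef]

set_option maxHeartbeats 1000000 in
/-- Approximation of a member of `CC P` by a member of `CC Q` for `Q` Hausdorff-close to `P`. -/
theorem CC_approx {α γ δ : ℝ} (hα0 : 0 ≤ α) (hαγ : α < γ) (hγ1 : γ < 1) (hδ : 0 < δ)
    {P : Set B} (hPne : P.Nonempty) (hPbdd : Bornology.IsBounded P)
    {f : B →ᵇ B} (hf : f ∈ CC P) {η : ℝ} (hη : 0 < η) :
    ∃ ρ : ℝ, 0 < ρ ∧ ∀ Q : Set B, Q.Nonempty → IsClosed Q → Bornology.IsBounded Q →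
      ParaConv α Q → Metric.hausdorffDist P Q < ρ →
      ∃ g ∈ CC Q, dist g f ≤ η := by
  set C : ℝ := (1 + δ) / (1 - γ) with hCdef
  have hC : 0 < C := by rw [hCdef]; exact div_pos (by linarith) (by linarith)
  set η₁ : ℝ := η / (2 * C + 2) with hη₁def
  have hη₁ : 0 < η₁ := by rw [hη₁def]; exact div_pos hη (by linarith)
  obtain ⟨s₀, hs₀, hs₀p⟩ := hf.2 η₁ hη₁
  set s : ℝ := min s₀ η₁ with hsdef
  have hs : 0 < s := lt_min hs₀ hη₁
  have hsprop : ∀ b, Metric.infDist b P ≤ s → dist (f b) b ≤ η₁ :=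
    fun b hb => hs₀p b (le_trans hb (min_le_left _ _))
  have hsη₁ : s ≤ η₁ := min_le_right _ _
  refine ⟨s / 4, by linarith, fun Q hQne hQcl hQbdd hQpara hPQ => ?_⟩
  set ρ : ℝ := s / 4 with hρdef
  set ρ' : ℝ := s / 2 with hρ'def
  have hρ'pos : 0 < ρ' := by rw [hρ'def]; linarith
  have hedist : EMetric.hausdorffEdist P Q ≠ ⊤ :=
    Metric.hausdorffEdist_ne_top_of_nonempty_of_bounded hPne hQne hPbdd hQbdd
  have hfQ : ∀ b, Metric.infDist (f b) Q ≤ ρ := fun b =>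
    le_of_lt (lt_of_le_of_lt (Metric.infDist_le_hausdorffDist_of_mem (hf.1 b) hedist) hPQ)
  have hPb : ∀ b : B, Metric.infDist b P ≤ Metric.infDist b Q + ρ := by
    intro b
    have h1 : Metric.infDist b P ≤ Metric.infDist b Q + Metric.hausdorffDist Q P :=
      Metric.infDist_le_infDist_add_hausdorffDist (by rwa [EMetric.hausdorffEdist_comm])
    rw [Metric.hausdorffDist_comm] at h1
    linarith
  -- blend
  set lam : B → ℝ := fun b => max 0 (1 - Metric.infDist b Q / ρ') with hlamdef
  have hlamc : Continuous lam :=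
    continuous_const.max (continuous_const.sub ((Metric.continuous_infDist_pt Q).div_const ρ'))
  have hlam0 : ∀ b, 0 ≤ lam b := fun b => le_max_left _ _
  have hlam1 : ∀ b, lam b ≤ 1 := by
    intro b
    apply max_le (by norm_num)
    have : 0 ≤ Metric.infDist b Q / ρ' := div_nonneg Metric.infDist_nonneg hρ'pos.le
    linarith
  set h : B → B := fun b => f b + lam b • (b - f b) with hhdef
  have hhc : Continuous h := f.continuous.add (hlamc.smul (continuous_id.sub f.continuous))
  have hhf : ∀ b, dist (h b) (f b) = lam b * dist b (f b) := by
    intro b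
    rw [hhdef]; dsimp only
    rw [dist_eq_norm, add_sub_cancel_left, norm_smul, Real.norm_eq_abs,
      abs_of_nonneg (hlam0 b), ← dist_eq_norm]
  have hlamzero : ∀ b, ρ' ≤ Metric.infDist b Q → lam b = 0 := by
    intro b hb
    rw [hlamdef]; dsimp only
    apply max_eq_left
    rw [sub_nonpos, le_div_iff₀ hρ'pos, one_mul]
    exact hb
  have hnear : ∀ b, Metric.infDist b Q < ρ' → dist (f b) b ≤ η₁ := by
    intro b hb
    apply hsprop
    calc Metric.infDist b P ≤ Metric.infDist b Q + ρ := hPb b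
      _ ≤ ρ' + ρ := by linarith
      _ ≤ s := by rw [hρdef, hρ'def]; linarith
  have hE2 : ∀ b, dist (h b) (f b) ≤ η₁ := by
    intro b
    rcases lt_or_ge (Metric.infDist b Q) ρ' with hb | hb
    · rw [hhf b]
      calc lam b * dist b (f b) ≤ 1 * dist b (f b) :=
            mul_le_mul_of_nonneg_right (hlam1 b) dist_nonneg
        _ = dist (f b) b := by rw [one_mul, dist_comm]
        _ ≤ η₁ := hnear b hb
    · rw [hhf b, hlamzero b hb, zero_mul]; exact hη₁.le
  have hE1 : ∀ b, Metric.infDist (h b) Q ≤ ρ + η₁ := by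
    intro b
    calc Metric.infDist (h b) Q ≤ Metric.infDist (f b) Q + dist (h b) (f b) :=
          Metric.infDist_le_infDist_add_dist
      _ ≤ ρ + η₁ := add_le_add (hfQ b) (hE2 b)
  -- cone estimate near Q
  have hE3 : ∀ b, Metric.infDist b Q < ρ' →
      dist (h b) b ≤ Metric.infDist b Q / ρ' * η₁ := by
    intro b hb
    have h1ml : 1 - lam b ≤ Metric.infDist b Q / ρ' := by
      rw [hlamdef]; dsimp only
      have := le_max_right (0:ℝ) (1 - Metric.infDist b Q / ρ')
      linarith [le_max_right (0:ℝ) (1 - Metric.infDist b Q / ρ')]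
    have hdist : dist (h b) b = (1 - lam b) * dist (f b) b := by
      rw [hhdef]; dsimp only
      rw [dist_eq_norm]
      have : f b + lam b • (b - f b) - b = (1 - lam b) • (f b - b) := by module
      rw [this, norm_smul, Real.norm_eq_abs, abs_of_nonneg (by linarith [hlam1 b]),
        ← dist_eq_norm]
    rw [hdist]
    have := hnear b hb
    have h1ml0 : 0 ≤ 1 - lam b := by linarith [hlam1 b]
    calc (1 - lam b) * dist (f b) b ≤ (1 - lam b) * η₁ :=
          mul_le_mul_of_nonneg_left this h1ml0
      _ ≤ Metric.infDist b Q / ρ' * η₁ := mul_le_mul_of_nonneg_right h1ml hη₁.le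
  -- push h into Q
  obtain ⟨H, hHc, hH⟩ := engine_push hα0 hαγ hγ1 hδ hQne hQcl hQpara hhc
    (ε := fun b => Metric.infDist (h b) Q) ((Metric.continuous_infDist_pt Q).comp hhc)
    (fun b => Metric.infDist_nonneg) (fun b => le_refl _)
  set g : B →ᵇ B := mkBCF hQbdd hHc (fun b => (hH b).1) with hgdef
  have hgmem : g ∈ CC Q := by
    refine ⟨fun b => (hH b).1, fun η' hη' => ?_⟩
    set K : ℝ := (C + 1) * (η₁ / ρ' + 1) with hKdef
    have hK : 0 < K := by
      rw [hKdef]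
      have : 0 < η₁ / ρ' := div_pos hη₁ hρ'pos
      nlinarith
    refine ⟨min (ρ' / 2) (η' / K), lt_min (by linarith) (div_pos hη' hK), fun b hb => ?_⟩
    have hb1 : Metric.infDist b Q < ρ' :=
      lt_of_le_of_lt (le_trans hb (min_le_left _ _)) (by linarith)
    have hb2 : Metric.infDist b Q ≤ η' / K := le_trans hb (min_le_right _ _)
    set u : ℝ := Metric.infDist b Q with hudef
    have hu0 : 0 ≤ u := Metric.infDist_nonneg
    have h3 := hE3 b hb1
    have hhbQ : Metric.infDist (h b) Q ≤ dist (h b) b + u := by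
      rw [add_comm]; exact Metric.infDist_le_infDist_add_dist
    have h4 : dist (H b) (h b) ≤ C * (dist (h b) b + u) :=
      le_trans (hH b).2 (mul_le_mul_of_nonneg_left hhbQ hC.le)
    have h5 : dist (H b) b ≤ (C + 1) * dist (h b) b + C * u := by
      have := dist_triangle (H b) (h b) b
      nlinarith
    have h6 : dist (H b) b ≤ K * u := by
      have hd' : dist (h b) b ≤ η₁ / ρ' * u := by
        calc dist (h b) b ≤ u / ρ' * η₁ := h3
          _ = η₁ / ρ' * u := by ring
      have e1 : (C + 1) * dist (h b) b ≤ (C + 1) * (η₁ / ρ' * u) :=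
        mul_le_mul_of_nonneg_left hd' (by linarith)
      have e2 : C * u ≤ (C + 1) * u :=
        mul_le_mul_of_nonneg_right (by linarith) hu0
      calc dist (H b) b ≤ (C + 1) * dist (h b) b + C * u := h5
        _ ≤ (C + 1) * (η₁ / ρ' * u) + (C + 1) * u := by linarith
        _ = K * u := by rw [hKdef]; ring
    calc dist (g b) b ≤ K * u := h6
      _ ≤ K * (η' / K) := mul_le_mul_of_nonneg_left hb2 hK.le
      _ = η' := by rw [mul_comm, div_mul_cancel₀ _ (ne_of_gt hK)]
  refine ⟨g, hgmem, ?_⟩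
  rw [BoundedContinuousFunction.dist_le hη.le]
  intro b
  have h1 : dist (H b) (h b) ≤ C * (ρ + η₁) :=
    le_trans (hH b).2 (mul_le_mul_of_nonneg_left (hE1 b) hC.le)
  have hρη : ρ ≤ η₁ := by rw [hρdef]; linarith
  calc dist (g b) (f b) ≤ dist (H b) (h b) + dist (h b) (f b) := dist_triangle _ _ _
    _ ≤ C * (ρ + η₁) + η₁ := add_le_add h1 (hE2 b)
    _ ≤ C * (2 * η₁) + η₁ := by nlinarith
    _ ≤ η := by
        rw [hη₁def]
        rw [div_eq_inv_mul]
        have h2 : (0:ℝ) < 2 * C + 2 := by linarith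
        field_simp
        nlinarith

theorem diam_le_diam_add_haus {s t : Set B} (hsne : s.Nonempty) (htne : t.Nonempty)
    (hsb : Bornology.IsBounded s) (htb : Bornology.IsBounded t) :
    Metric.diam s ≤ Metric.diam t + 2 * Metric.hausdorffDist s t := by
  have hfin : EMetric.hausdorffEdist s t ≠ ⊤ :=
    Metric.hausdorffEdist_ne_top_of_nonempty_of_bounded hsne htne hsb htb
  have hHd : 0 ≤ Metric.hausdorffDist s t := Metric.hausdorffDist_nonneg
  apply Metric.diam_le_of_forall_dist_le (by linarith [Metric.diam_nonneg (s := t)])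
  intro a ha b hb
  apply le_of_forall_pos_le_add
  intro τ hτ
  have h1 : Metric.infDist a t < Metric.hausdorffDist s t + τ / 2 :=
    lt_of_le_of_lt (Metric.infDist_le_hausdorffDist_of_mem ha hfin) (by linarith)
  have h2 : Metric.infDist b t < Metric.hausdorffDist s t + τ / 2 :=
    lt_of_le_of_lt (Metric.infDist_le_hausdorffDist_of_mem hb hfin) (by linarith)
  obtain ⟨a', ha', haa'⟩ := (Metric.infDist_lt_iff htne).1 h1
  obtain ⟨b', hb', hbb'⟩ := (Metric.infDist_lt_iff htne).1 h2
  have h3 : dist a' b' ≤ Metric.diam t := Metric.dist_le_diam_of_mem htb ha' hb'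
  calc dist a b ≤ dist a a' + dist a' b' + dist b' b := dist_triangle4 _ _ _ _
    _ ≤ (Metric.hausdorffDist s t + τ / 2) + Metric.diam t
        + (Metric.hausdorffDist s t + τ / 2) := by
        have := dist_comm b' b
        rw [dist_comm b' b]
        exact add_le_add (add_le_add haa'.le h3) hbb'.le
    _ = Metric.diam t + 2 * Metric.hausdorffDist s t + τ := by ring
end Bside

/-- Continuous choice of retractions onto paraconvex sets: for `0 ≤ α < 1/2`, a
Hausdorff-continuous multivalued mapping from a paracompact Hausdorff space into a
Banach space whose values are nonempty closed bounded α-paraconvex sets admits a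
continuous assignment `x ↦ Ret x` of bounded continuous retractions of `B` onto `F x`. -/
theorem continuous_choice_of_retractions_paraconvex
    {X B : Type*} [TopologicalSpace X] [ParacompactSpace X] [T2Space X]
    [NormedAddCommGroup B] [NormedSpace ℝ B] [CompleteSpace B]
    (α : ℝ) (hα0 : 0 ≤ α) (hα : α < 1 / 2)
    (F : X → Set B)
    (hne : ∀ x : X, (F x).Nonempty)
    (hclosed : ∀ x : X, IsClosed (F x))
    (hbdd : ∀ x : X, Bornology.IsBounded (F x))
    (hpara : ∀ x : X, ∀ r : ℝ, 0 < r → ∀ c : B,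
      ∀ q ∈ convexHull ℝ (F x ∩ Metric.ball c r), Metric.infDist q (F x) ≤ α * r)
    (hHcont : ∀ x₀ : X, ∀ ε : ℝ, 0 < ε → ∃ U ∈ nhds x₀,
      ∀ x ∈ U, Metric.hausdorffDist (F x) (F x₀) < ε) :
    ∃ Ret : X → BoundedContinuousFunction B B, Continuous Ret ∧
      ∀ x : X, (∀ b : B, Ret x b ∈ F x) ∧ ∀ b ∈ F x, Ret x b = b := by
  -- fix constants
  set γ : ℝ := (2 * α + 1) / 4 with hγdef
  set δ : ℝ := (1 - 2 * α) / 8 with hδdef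
  have hαγ : α < γ := by rw [hγdef]; linarith
  have hγ1 : γ < 1 := by rw [hγdef]; linarith
  have hδ : 0 < δ := by rw [hδdef]; linarith
  set βC : ℝ := (1 + δ) / (1 - γ) * α with hβCdef
  have h1γ : 0 < 1 - γ := by linarith
  have hβC0 : 0 ≤ βC := by
    rw [hβCdef]
    exact mul_nonneg (div_nonneg (by linarith) h1γ.le) hα0
  have hβC1 : βC < 1 := by
    rw [hβCdef, div_mul_eq_mul_div, div_lt_one h1γ]
    have hkey : 0 < (1 - 2 * α) * (6 - α) := by
      apply mul_pos <;> linarith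
    rw [hγdef, hδdef]
    nlinarith [hkey]
  set γX : ℝ := (βC + 1) / 2 with hγXdef
  have hβγX : βC < γX := by rw [hγXdef]; linarith
  have hγX1 : γX < 1 := by rw [hγXdef]; linarith
  have hparaF : ∀ x, ParaConv α (F x) := fun x => hpara x
  -- the multivalued map into C_b(B,B)
  set G : X → Set (B →ᵇ B) := fun x => CC (F x) with hGdef
  have hGne : ∀ x, (G x).Nonempty :=
    fun x => CC_nonempty hα0 hαγ hγ1 hδ (hne x) (hclosed x) (hbdd x) (hparaF x)
  have hGcl : ∀ x, IsClosed (G x) := fun x => CC_closed (hclosed x)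
  have hGpc : ∀ x, ParaConv βC (G x) :=
    fun x => CC_paraconv hα0 hαγ hγ1 hδ (hne x) (hclosed x) (hbdd x) (hparaF x)
  have hGlsc : LSCm G := by
    intro x₀ e r ⟨p₀, hp₀, hd⟩
    have hη : 0 < (r - dist p₀ e) / 2 := by
      have := hd; linarith
    obtain ⟨ρ, hρ, happ⟩ := CC_approx hα0 hαγ hγ1 hδ (hne x₀) (hbdd x₀) hp₀ hη
    obtain ⟨U, hU, hUp⟩ := hHcont x₀ ρ hρ
    refine Filter.eventually_iff_exists_mem.2 ⟨U, hU, fun x hx => ?_⟩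
    have hhd : Metric.hausdorffDist (F x₀) (F x) < ρ := by
      rw [Metric.hausdorffDist_comm]; exact hUp x hx
    obtain ⟨g, hgmem, hgd⟩ := happ (F x) (hne x) (hclosed x) (hbdd x) (hparaF x) hhd
    refine ⟨g, hgmem, ?_⟩
    calc dist g e ≤ dist g p₀ + dist p₀ e := dist_triangle _ _ _
      _ < r := by linarith
  -- initial approximation
  set t : X → Set (B →ᵇ B) :=
    fun x => convexHull ℝ {p : B →ᵇ B | ∃ g ∈ CC (F x), dist p g < 1} with htdef
  have hH : ∀ x₀ : X, ∃ c : B →ᵇ B, ∀ᶠ y in 𝓝 x₀, c ∈ t y := by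
    intro x₀
    obtain ⟨g₀, hg₀⟩ := hGne x₀
    refine ⟨g₀, ?_⟩
    have := hGlsc x₀ g₀ 1 ⟨g₀, hg₀, by simp⟩
    filter_upwards [this] with y hy
    obtain ⟨p, hpG, hpd⟩ := hy
    exact subset_convexHull ℝ _ ⟨p, hpG, by rwa [dist_comm]⟩
  obtain ⟨f₀, hf₀⟩ := exists_continuous_forall_mem_convex_of_local_const
    (fun x => convex_convexHull ℝ _) hH
  set ε₀ : X → ℝ := fun x => βC * (Metric.diam (F x) + 2) + 2 with hε₀def
  have hDcont : Continuous fun x => Metric.diam (F x) := by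
    rw [continuous_iff_continuousAt]
    intro x₀
    rw [ContinuousAt, Metric.tendsto_nhds]
    intro η hη
    obtain ⟨U, hU, hUp⟩ := hHcont x₀ (η / 3) (by linarith)
    refine Filter.eventually_iff_exists_mem.2 ⟨U, hU, fun x hx => ?_⟩
    have h1 : Metric.diam (F x) ≤ Metric.diam (F x₀) + 2 * Metric.hausdorffDist (F x) (F x₀) :=
      diam_le_diam_add_haus (hne x) (hne x₀) (hbdd x) (hbdd x₀)
    have h2 : Metric.diam (F x₀) ≤ Metric.diam (F x) + 2 * Metric.hausdorffDist (F x₀) (F x) :=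
      diam_le_diam_add_haus (hne x₀) (hne x) (hbdd x₀) (hbdd x)
    have h3 := hUp x hx
    rw [Metric.hausdorffDist_comm] at h2
    rw [Real.dist_eq, abs_sub_lt_iff]
    constructor <;> linarith
  have hε₀c : Continuous ε₀ := by
    rw [hε₀def]
    exact ((continuous_const.mul (hDcont.add continuous_const)).add continuous_const)
  have hε₀pos : ∀ x, 0 < ε₀ x := by
    intro x
    rw [hε₀def]
    have h1 : 0 ≤ Metric.diam (F x) := Metric.diam_nonneg
    have : 0 ≤ βC * (Metric.diam (F x) + 2) := mul_nonneg hβC0 (by linarith)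
    dsimp only
    linarith
  have hd₀ : ∀ x, Metric.infDist (f₀ x) (G x) < ε₀ x := by
    intro x
    obtain ⟨gs, hgs⟩ := hGne x
    set D : ℝ := Metric.diam (F x) with hDdef
    have hD0 : 0 ≤ D := Metric.diam_nonneg
    have hsub : {p : B →ᵇ B | ∃ g ∈ CC (F x), dist p g < 1} ⊆
        convexHull ℝ (CC (F x) ∩ Metric.ball gs (D + 2)) + Metric.closedBall (0 : B →ᵇ B) 1 := by
      rintro p ⟨g, hg, hpg⟩
      have hggs : dist g gs ≤ D := by
        rw [BoundedContinuousFunction.dist_le hD0]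
        exact fun b => Metric.dist_le_diam_of_mem (hbdd x) (hg.1 b) (hgs.1 b)
      refine ⟨g, subset_convexHull ℝ _ ⟨hg, mem_ball.2 (by linarith)⟩, p - g, ?_, by simp⟩
      simpa [dist_eq_norm, ← dist_eq_norm] using hpg.le
    have hmem : f₀ x ∈ convexHull ℝ (CC (F x) ∩ Metric.ball gs (D + 2))
        + Metric.closedBall (0 : B →ᵇ B) 1 := by
      exact convexHull_min hsub ((convex_convexHull ℝ _).add (convex_closedBall _ _)) (hf₀ x)
    obtain ⟨a, ha, w, hw, hsum⟩ := hmem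
    have h1 : Metric.infDist a (CC (F x)) ≤ βC * (D + 2) :=
      hGpc x (D + 2) (by linarith) gs a ha
    have h2 : dist (f₀ x) a ≤ 1 := by
      rw [← hsum, dist_eq_norm, add_sub_cancel_left]
      simpa [Metric.mem_closedBall, dist_eq_norm] using hw
    calc Metric.infDist (f₀ x) (G x)
        ≤ Metric.infDist a (G x) + dist (f₀ x) a := Metric.infDist_le_infDist_add_dist
      _ ≤ βC * (D + 2) + 1 := add_le_add h1 h2
      _ < ε₀ x := by rw [hε₀def]; dsimp only; rw [← hDdef]; linarith
  obtain ⟨Ret, hRc, hR⟩ := engine_iterate hβC0 hβγX hγX1 hGlsc hGpc hGne hGcl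
    f₀.continuous hε₀c hε₀pos hd₀
  exact ⟨Ret, hRc, fun x => ⟨fun b => ((hR x).1).1 b, fun b hb => CC_fix (hR x).1 hb⟩⟩
end
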